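/- Let 𝔤 = su(2,1), 𝔟 ⊆ 𝔤 its subalgebra of upper-triangular elements, and W ⊆ 𝔤 the unique real subspace with 𝔟 ⊆ W, dim_ℝ W = 7 and [𝔟, W] ⊆ W. Consider the 2-dimensional real quotient module W/𝔟, on which 𝔟 acts by b·(w mod 𝔟) = [b,w] mod 𝔟. Then there exist exactly two ℝ-linear endomorphisms 𝒥 of W/𝔟 satisfying 𝒥∘𝒥 = −id and commuting with the action of every element of 𝔟, and these two endomorphisms are negatives of each other. (Geometrically: the invariant rank-2 distribution on the CR sphere SU(2,1)/B carries exactly two invariant almost complex structures, ±𝒥.) -/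
import Mathlib


open Matrix

/-- The 3×3 antidiagonal matrix with ones on the antidiagonal. -/
def J3 : Matrix (Fin 3) (Fin 3) ℂ := !![0, 0, 1; 0, 1, 0; 1, 0, 0]

/-- The Borel subalgebra `𝔟 ⊆ su(2,1)` of upper-triangular elements, as a real
subspace of the 3×3 complex matrices. -/
noncomputable def borelSub : Submodule ℝ (Matrix (Fin 3) (Fin 3) ℂ) where
  carrier := {Xm | (Xmᴴ * J3 + J3 * Xm = 0 ∧ Xm.trace = 0) ∧
    ∀ i j : Fin 3, j < i → Xm i j = 0}
  zero_mem' := by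
    refine ⟨⟨?_, ?_⟩, ?_⟩ <;> simp
  add_mem' := by
    rintro Xm Ym ⟨⟨hX1, hX2⟩, hX3⟩ ⟨⟨hY1, hY2⟩, hY3⟩
    refine ⟨⟨?_, ?_⟩, ?_⟩
    · have h : (Xm + Ym)ᴴ * J3 + J3 * (Xm + Ym)
        = (Xmᴴ * J3 + J3 * Xm) + (Ymᴴ * J3 + J3 * Ym) := by
        rw [Matrix.conjTranspose_add, Matrix.add_mul, Matrix.mul_add]; abel
      rw [h, hX1, hY1, add_zero]
    · rw [Matrix.trace_add, hX2, hY2, add_zero]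
    · intro i j hij
      simp [Matrix.add_apply, hX3 i j hij, hY3 i j hij]
  smul_mem' := by
    rintro r Xm ⟨⟨hX1, hX2⟩, hX3⟩
    refine ⟨⟨?_, ?_⟩, ?_⟩
    · have h : (r • Xm)ᴴ * J3 + J3 * (r • Xm) = r • (Xmᴴ * J3 + J3 * Xm) := by
        rw [Matrix.conjTranspose_smul, star_trivial, Matrix.smul_mul, Matrix.mul_smul,
          smul_add]
      rw [h, hX1, smul_zero]
    · rw [Matrix.trace_smul, hX2, smul_zero]
    · intro i j hij
      simp [Matrix.smul_apply, hX3 i j hij]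

open ComplexConjugate in
lemma su_21 (X : Matrix (Fin 3) (Fin 3) ℂ) (h : Xᴴ * J3 + J3 * X = 0) :
    X 2 1 = -conj (X 1 0) := by
  have h' := congrFun (congrFun h 0) 1
  simp [Matrix.mul_apply, J3, Fin.sum_univ_three, Matrix.conjTranspose_apply,
    Matrix.vecMul, dotProduct, Matrix.vecHead, Matrix.vecTail] at h'
  linear_combination h'

open ComplexConjugate in
lemma su_22 (X : Matrix (Fin 3) (Fin 3) ℂ) (h : Xᴴ * J3 + J3 * X = 0) :
    X 2 2 = -conj (X 0 0) := by
  have h' := congrFun (congrFun h 2) 0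
  simp [Matrix.mul_apply, J3, Fin.sum_univ_three, Matrix.conjTranspose_apply,
    Matrix.vecMul, dotProduct, Matrix.vecHead, Matrix.vecTail] at h'
  have := congrArg conj h'
  simp at this
  linear_combination this

open ComplexConjugate in
lemma su_02 (X : Matrix (Fin 3) (Fin 3) ℂ) (h : Xᴴ * J3 + J3 * X = 0) :
    conj (X 0 2) = -(X 0 2) := by
  have h' := congrFun (congrFun h 2) 2
  simp [Matrix.mul_apply, J3, Fin.sum_univ_three, Matrix.conjTranspose_apply,
    Matrix.vecMul, dotProduct, Matrix.vecHead, Matrix.vecTail] at h'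
  linear_combination h'

open ComplexConjugate in
lemma su_12 (X : Matrix (Fin 3) (Fin 3) ℂ) (h : Xᴴ * J3 + J3 * X = 0) :
    X 1 2 = -conj (X 0 1) := by
  have h' := congrFun (congrFun h 1) 2
  simp [Matrix.mul_apply, J3, Fin.sum_univ_three, Matrix.conjTranspose_apply,
    Matrix.vecMul, dotProduct, Matrix.vecHead, Matrix.vecTail] at h'
  linear_combination h'

/-- A parametrized generic element of the Borel subalgebra. -/
def bmat (x y u v t : ℝ) : Matrix (Fin 3) (Fin 3) ℂ :=
  !![x + y*Complex.I, u + v*Complex.I, t*Complex.I;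
     0, -2*y*Complex.I, -u + v*Complex.I;
     0, 0, -x + y*Complex.I]

lemma bmat_mem (x y u v t : ℝ) : bmat x y u v t ∈ borelSub := by
  refine ⟨⟨?_, ?_⟩, ?_⟩
  · ext i j
    fin_cases i <;> fin_cases j <;>
      simp [bmat, J3, Matrix.mul_apply, Fin.sum_univ_three, Matrix.vecHead, Matrix.vecTail,
        Matrix.conjTranspose_apply, Complex.ext_iff] <;> ring
  · simp [bmat, Matrix.trace_fin_three, Complex.ext_iff]; ring
  · intro i j h
    fin_cases i <;> fin_cases j <;> first
      | exact absurd h (by decide)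
      | simp [bmat, Matrix.vecHead, Matrix.vecTail]

noncomputable def psiB : borelSub →ₗ[ℝ] (Fin 5 → ℝ) where
  toFun x := ![(x.1 0 0).re, (x.1 0 0).im, (x.1 0 1).re, (x.1 0 1).im, (x.1 0 2).im]
  map_add' x y := by
    funext i
    fin_cases i <;> simp
  map_smul' r x := by
    funext i
    fin_cases i <;> simp

lemma finrank_borel : Module.finrank ℝ borelSub = 5 := by
  have hbij : Function.Bijective psiB := by
    constructor
    · rw [← LinearMap.ker_eq_bot, LinearMap.ker_eq_bot']
      intro x hx
      obtain ⟨⟨h1, h2⟩, h3⟩ := x.2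
      have e00 : x.1 0 0 = 0 := by
        have a := congrFun hx 0; have b := congrFun hx 1
        simp [psiB] at a b
        exact Complex.ext a b
      have e01 : x.1 0 1 = 0 := by
        have a := congrFun hx 2; have b := congrFun hx 3
        simp [psiB] at a b
        exact Complex.ext a b
      have e02 : x.1 0 2 = 0 := by
        have a := congrFun hx 4
        simp [psiB] at a
        have hre : (x.1 0 2).re = 0 := by
          have := congrArg Complex.re (su_02 x.1 h1)
          simp at this
          linarith
        exact Complex.ext hre a
      have e22 : x.1 2 2 = 0 := by rw [su_22 x.1 h1, e00]; simp
      have e11 : x.1 1 1 = 0 := by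
        have h2' := h2
        rw [Matrix.trace_fin_three, e00, e22] at h2'
        linear_combination h2'
      have e12 : x.1 1 2 = 0 := by rw [su_12 x.1 h1, e01]; simp
      apply Subtype.ext
      ext i j
      fin_cases i <;> fin_cases j <;>
        first
          | exact h3 _ _ (by decide)
          | assumption
    · intro c
      refine ⟨⟨bmat (c 0) (c 1) (c 2) (c 3) (c 4), bmat_mem _ _ _ _ _⟩, ?_⟩
      funext i
      fin_cases i <;> simp [psiB, bmat, Matrix.vecHead, Matrix.vecTail]
  have e := LinearEquiv.ofBijective psiB hbij
  rw [e.finrank_eq]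
  simp


set_option maxHeartbeats 1000000
set_option synthInstance.maxHeartbeats 1000000

/-- Let `W` be the unique real subspace of `𝔤 = su(2,1)` with `𝔟 ⊆ W`, `dim_ℝ W = 7`
and `[𝔟, W] ⊆ W`.  On the 2-dimensional quotient `W/𝔟`, with `𝔟` acting by
`b·(w mod 𝔟) = [b,w] mod 𝔟`, there are exactly two real-linear endomorphisms `𝒥` with
`𝒥∘𝒥 = −id` commuting with the `𝔟`-action, and they are negatives of each other:
the invariant rank-2 distribution on the CR sphere `SU(2,1)/B` carries exactly two
invariant almost complex structures `±𝒥`. -/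
theorem two_invariant_complex_structures
    (W : Submodule ℝ (Matrix (Fin 3) (Fin 3) ℂ))
    (hBW : borelSub ≤ W)
    (hWg : ∀ Xm ∈ W, Xmᴴ * J3 + J3 * Xm = 0 ∧ Matrix.trace Xm = 0)
    (hdim : Module.finrank ℝ W = 7)
    (hbr : ∀ Xm ∈ borelSub, ∀ Ym ∈ W, Xm * Ym - Ym * Xm ∈ W) :
    ∃ 𝒥 : (W ⧸ borelSub.comap W.subtype) →ₗ[ℝ] (W ⧸ borelSub.comap W.subtype),
      𝒥 ≠ -𝒥 ∧
      ∀ K : (W ⧸ borelSub.comap W.subtype) →ₗ[ℝ] (W ⧸ borelSub.comap W.subtype),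
        ((∀ q, K (K q) = -q) ∧
          (∀ Xm, ∀ hX : Xm ∈ borelSub, ∀ w w' : W,
            K (Submodule.Quotient.mk w) = Submodule.Quotient.mk w' →
            K (Submodule.Quotient.mk
                (⟨Xm * (w : Matrix (Fin 3) (Fin 3) ℂ) - (w : Matrix (Fin 3) (Fin 3) ℂ) * Xm,
                  hbr Xm hX (w : Matrix (Fin 3) (Fin 3) ℂ) w.2⟩ : W)) =
              Submodule.Quotient.mk
                (⟨Xm * (w' : Matrix (Fin 3) (Fin 3) ℂ) - (w' : Matrix (Fin 3) (Fin 3) ℂ) * Xm,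
                  hbr Xm hX (w' : Matrix (Fin 3) (Fin 3) ℂ) w'.2⟩ : W)))
          ↔ (K = 𝒥 ∨ K = -𝒥) := by
  classical
  have hW20 : ∀ x ∈ W, x 2 0 = 0 := by
    by_contra hcon
    push_neg at hcon
    obtain ⟨w0, hw0, hg⟩ := hcon
    have hY1 : bmat 0 0 1 0 0 ∈ borelSub := bmat_mem _ _ _ _ _
    have hY2 : bmat 0 0 0 1 0 ∈ borelSub := bmat_mem _ _ _ _ _
    set u1 := bmat 0 0 1 0 0 * w0 - w0 * bmat 0 0 1 0 0 with hu1def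
    set u2 := bmat 0 0 0 1 0 * w0 - w0 * bmat 0 0 0 1 0 with hu2def
    have hu1W : u1 ∈ W := hbr _ hY1 _ hw0
    have hu2W : u2 ∈ W := hbr _ hY2 _ hw0
    have hu1_20 : u1 2 0 = 0 := by
      simp [hu1def, Matrix.sub_apply, Matrix.mul_apply, Fin.sum_univ_three, bmat,
        Matrix.vecHead, Matrix.vecTail, Matrix.vecMul, dotProduct]
    have hu2_20 : u2 2 0 = 0 := by
      simp [hu2def, Matrix.sub_apply, Matrix.mul_apply, Fin.sum_univ_three, bmat,
        Matrix.vecHead, Matrix.vecTail, Matrix.vecMul, dotProduct]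
    have hu1_10 : u1 1 0 = -(w0 2 0) := by
      simp [hu1def, Matrix.sub_apply, Matrix.mul_apply, Fin.sum_univ_three, bmat,
        Matrix.vecHead, Matrix.vecTail, Matrix.vecMul, dotProduct]
    have hu2_10 : u2 1 0 = Complex.I * (w0 2 0) := by
      simp [hu2def, Matrix.sub_apply, Matrix.mul_apply, Fin.sum_univ_three, bmat,
        Matrix.vecHead, Matrix.vecTail, Matrix.vecMul, dotProduct]
    set v : Fin 8 → Matrix (Fin 3) (Fin 3) ℂ :=
      ![bmat 1 0 0 0 0, bmat 0 1 0 0 0, bmat 0 0 1 0 0, bmat 0 0 0 1 0, bmat 0 0 0 0 1,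
        u1, u2, w0] with hvdef
    have hvW : ∀ i, v i ∈ W := by
      intro i
      fin_cases i
      · exact hBW (bmat_mem _ _ _ _ _)
      · exact hBW (bmat_mem _ _ _ _ _)
      · exact hBW (bmat_mem _ _ _ _ _)
      · exact hBW (bmat_mem _ _ _ _ _)
      · exact hBW (bmat_mem _ _ _ _ _)
      · exact hu1W
      · exact hu2W
      · exact hw0
    have hli : LinearIndependent ℝ v := by
      rw [Fintype.linearIndependent_iff]
      intro c hc
      rw [Fin.sum_univ_eight] at hc
      have hc' : c 0 • bmat 1 0 0 0 0 + c 1 • bmat 0 1 0 0 0 + c 2 • bmat 0 0 1 0 0 +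
          c 3 • bmat 0 0 0 1 0 + c 4 • bmat 0 0 0 0 1 + c 5 • u1 + c 6 • u2 + c 7 • w0 = 0 := hc
      have h20 := congrFun (congrFun hc' 2) 0
      simp [Matrix.add_apply, Matrix.smul_apply, bmat, Matrix.vecHead, Matrix.vecTail,
        hu1_20, hu2_20, Complex.real_smul] at h20
      have hc7 : c 7 = 0 := h20.resolve_right hg
      have h10 := congrFun (congrFun hc' 1) 0
      simp [Matrix.add_apply, Matrix.smul_apply, bmat, Matrix.vecHead, Matrix.vecTail,
        hu1_10, hu2_10, hc7, Complex.real_smul] at h10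
      have hc56 : c 5 = 0 ∧ c 6 = 0 := by
        have hfac : ((-(c 5 : ℝ) + (c 6 : ℝ) * Complex.I : ℂ)) * (w0 2 0) = 0 := by
          push_cast
          linear_combination h10
        rcases mul_eq_zero.mp hfac with h | h
        · have h' := Complex.ext_iff.mp h
          simp at h'
          exact ⟨by linarith [h'.1], by linarith [h'.2]⟩
        · exact absurd h hg
      obtain ⟨hc5, hc6⟩ := hc56
      have h00 := congrFun (congrFun hc' 0) 0
      simp [Matrix.add_apply, Matrix.smul_apply, bmat, Matrix.vecHead, Matrix.vecTail,
        hc5, hc6, hc7, Complex.real_smul, Complex.ext_iff] at h00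
      have h01 := congrFun (congrFun hc' 0) 1
      simp [Matrix.add_apply, Matrix.smul_apply, bmat, Matrix.vecHead, Matrix.vecTail,
        hc5, hc6, hc7, Complex.real_smul, Complex.ext_iff] at h01
      have h02 := congrFun (congrFun hc' 0) 2
      simp [Matrix.add_apply, Matrix.smul_apply, bmat, Matrix.vecHead, Matrix.vecTail,
        hc5, hc6, hc7, Complex.real_smul, Complex.ext_iff] at h02
      intro i
      fin_cases i
      exacts [h00.1, h00.2, h01.1, h01.2, h02, hc5, hc6, hc7]
    have hliW : LinearIndependent ℝ (fun i => (⟨v i, hvW i⟩ : W)) := by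
      apply LinearIndependent.of_comp W.subtype
      exact hli
    have hcard := hliW.fintype_card_le_finrank
    rw [hdim] at hcard
    simp at hcard

  -- the coordinate functional
  set B : Submodule ℝ W := borelSub.comap W.subtype with hBdef
  let φ : W →ₗ[ℝ] ℂ :=
    { toFun := fun x => x.1 1 0
      map_add' := fun x y => rfl
      map_smul' := fun r x => rfl }
  have hφ : ∀ x : W, φ x = x.1 1 0 := fun _ => rfl
  -- kernel of φ
  have hkerφ : LinearMap.ker φ = B := by
    ext x
    constructor
    · intro hx
      have hx0 : x.1 1 0 = 0 := hx
      refine ⟨⟨(hWg x.1 x.2).1, (hWg x.1 x.2).2⟩, ?_⟩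
      intro i j hij
      fin_cases i <;> fin_cases j <;>
        first
          | exact absurd hij (by decide)
          | exact hx0
          | exact hW20 x.1 x.2
          | (show x.1 2 1 = 0; rw [su_21 x.1 (hWg x.1 x.2).1, hx0]; simp)
    · rintro ⟨-, h3⟩
      exact h3 1 0 (by decide)
  have hkerB : Module.finrank ℝ (LinearMap.ker φ) = 5 := by
    rw [hkerφ, hBdef]
    rw [(Submodule.comapSubtypeEquivOfLe hBW).finrank_eq]
    exact finrank_borel
  have hrn := LinearMap.finrank_range_add_finrank_ker φ
  rw [hkerB, hdim] at hrn
  have hrtop : LinearMap.range φ = ⊤ := by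
    apply Submodule.eq_top_of_finrank_eq
    rw [Complex.finrank_real_complex]
    omega
  have hφsurj : Function.Surjective φ := LinearMap.range_eq_top.mp hrtop
  -- quotient equivalence with ℂ
  have hle : B ≤ LinearMap.ker φ := le_of_eq hkerφ.symm
  let qm : (W ⧸ B) →ₗ[ℝ] ℂ := Submodule.liftQ B φ hle
  have hqmbij : Function.Bijective qm := by
    constructor
    · rw [← LinearMap.ker_eq_bot]
      exact Submodule.ker_liftQ_eq_bot B φ hle (le_of_eq hkerφ)
    · intro z
      obtain ⟨w, hw⟩ := hφsurj z
      exact ⟨Submodule.Quotient.mk w, by simpa [qm] using hw⟩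
  let e : (W ⧸ B) ≃ₗ[ℝ] ℂ := LinearEquiv.ofBijective qm hqmbij
  have he : ∀ w : W, e (Submodule.Quotient.mk w) = w.1 1 0 := fun w => rfl
  -- bracket coordinate computation
  have hmu : ∀ Xm ∈ borelSub, ∀ w : W,
      (Xm * w.1 - w.1 * Xm) 1 0 = (Xm 1 1 - Xm 0 0) * w.1 1 0 := by
    intro Xm hXm w
    have h10 : Xm 1 0 = 0 := hXm.2 1 0 (by decide)
    have h20 : Xm 2 0 = 0 := hXm.2 2 0 (by decide)
    have hw20 : w.1 2 0 = 0 := hW20 w.1 w.2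
    simp [Matrix.sub_apply, Matrix.mul_apply, Fin.sum_univ_three, h10, h20, hw20]
    ring
  -- multiplication by I
  let mulI : ℂ →ₗ[ℝ] ℂ :=
    { toFun := fun z => Complex.I * z
      map_add' := by intros; ring
      map_smul' := by intros; simp [Complex.real_smul]; ring }
  let J : (W ⧸ B) →ₗ[ℝ] (W ⧸ B) := e.symm.toLinearMap ∘ₗ mulI ∘ₗ e.toLinearMap
  have hJ : ∀ q, e (J q) = Complex.I * e q := by
    intro q
    simp [J, mulI]
  refine ⟨J, ?_, ?_⟩
  · intro hJeq
    obtain ⟨w, hw⟩ := hφsurj 1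
    have h1 := congrArg (fun f => e (f (Submodule.Quotient.mk w))) hJeq
    simp only [LinearMap.neg_apply, map_neg, hJ] at h1
    rw [he w] at h1
    rw [hφ] at hw
    rw [hw] at h1
    norm_num [Complex.ext_iff] at h1
  · intro K
    have hmain : ∀ (K : (W ⧸ B) →ₗ[ℝ] (W ⧸ B)) (ε : ℂ), ε * ε = -1 →
        (∀ q, e (K q) = ε * e q) →
        (∀ q, K (K q) = -q) ∧
        (∀ Xm, ∀ hX : Xm ∈ borelSub, ∀ w w' : W,
            K (Submodule.Quotient.mk w) = Submodule.Quotient.mk w' →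
            K (Submodule.Quotient.mk
                (⟨Xm * (w : Matrix (Fin 3) (Fin 3) ℂ) - (w : Matrix (Fin 3) (Fin 3) ℂ) * Xm,
                  hbr Xm hX (w : Matrix (Fin 3) (Fin 3) ℂ) w.2⟩ : W)) =
              Submodule.Quotient.mk
                (⟨Xm * (w' : Matrix (Fin 3) (Fin 3) ℂ) - (w' : Matrix (Fin 3) (Fin 3) ℂ) * Xm,
                  hbr Xm hX (w' : Matrix (Fin 3) (Fin 3) ℂ) w'.2⟩ : W)) := by
      intro K ε hε hKe
      constructor
      · intro q
        apply e.injective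
        rw [hKe, hKe, map_neg, ← mul_assoc, hε]
        ring
      · intro Xm hX w w' hmk
        apply e.injective
        rw [hKe, he, he]
        show ε * ((Xm * w.1 - w.1 * Xm) 1 0) = (Xm * w'.1 - w'.1 * Xm) 1 0
        rw [hmu Xm hX w, hmu Xm hX w']
        have hcoord : ε * w.1 1 0 = w'.1 1 0 := by
          have h := congrArg e hmk
          rw [hKe, he, he] at h
          exact h
        rw [← hcoord]
        ring
    constructor
    · rintro ⟨hK1, hK2⟩
      have hH : bmat 0 1 0 0 0 ∈ borelSub := bmat_mem _ _ _ _ _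
      have hHd : (bmat 0 1 0 0 0) 1 1 - (bmat 0 1 0 0 0) 0 0 = -3 * Complex.I := by
        simp [bmat, Matrix.vecHead, Matrix.vecTail]
        ring
      have step : ∀ z : ℂ, e (K (e.symm ((-3*Complex.I) * z)))
          = (-3*Complex.I) * e (K (e.symm z)) := by
        intro z
        obtain ⟨w, hw⟩ := hφsurj z
        rw [hφ] at hw
        obtain ⟨w', hw'⟩ := Submodule.Quotient.mk_surjective B (K (Submodule.Quotient.mk w))
        have h2 := hK2 (bmat 0 1 0 0 0) hH w w' hw'.symm
        have key1 : e (Submodule.Quotient.mk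
            (⟨bmat 0 1 0 0 0 * w.1 - w.1 * bmat 0 1 0 0 0, hbr _ hH _ w.2⟩ : W))
            = (-3*Complex.I) * z := by
          rw [he]
          show (bmat 0 1 0 0 0 * w.1 - w.1 * bmat 0 1 0 0 0) 1 0 = _
          rw [hmu _ hH w, hHd, hw]
        have key3 : e.symm z = Submodule.Quotient.mk w := by
          rw [LinearEquiv.symm_apply_eq, he, hw]
        have key2 : e.symm ((-3*Complex.I)*z) = Submodule.Quotient.mk
            (⟨bmat 0 1 0 0 0 * w.1 - w.1 * bmat 0 1 0 0 0, hbr _ hH _ w.2⟩ : W) := by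
          rw [LinearEquiv.symm_apply_eq]
          exact key1.symm
        rw [key2, h2, he]
        show (bmat 0 1 0 0 0 * w'.1 - w'.1 * bmat 0 1 0 0 0) 1 0 = _
        rw [hmu _ hH w', hHd, key3, ← hw', he]
      have hlin : ∀ z, e (K (e.symm (Complex.I * z))) = Complex.I * e (K (e.symm z)) := by
        intro z
        have h := step z
        have l1 : ((-3*Complex.I) * z) = (-3:ℝ) • (Complex.I * z) := by
          simp [Complex.real_smul]
          ring
        rw [l1, _root_.map_smul, _root_.map_smul, _root_.map_smul, Complex.real_smul] at h
        push_cast at h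
        linear_combination (-1/3 : ℂ) * h
      set c := e (K (e.symm 1)) with hcdef
      have hKz : ∀ z : ℂ, e (K (e.symm z)) = c * z := by
        intro z
        have hI : e (K (e.symm Complex.I)) = Complex.I * c := by
          have h := hlin 1
          simpa using h
        have hz : z = z.re • (1:ℂ) + z.im • Complex.I := by
          simp [Complex.real_smul, Complex.re_add_im]
        conv_lhs => rw [hz]
        simp only [map_add, _root_.map_smul]
        rw [hI]
        rw [Complex.real_smul, Complex.real_smul]
        conv_rhs => rw [← Complex.re_add_im z]
        ring
      have hc2 : c * c = -1 := by
        have h := hK1 (e.symm 1)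
        have h1 : K (e.symm 1) = e.symm c := by
          rw [eq_comm, LinearEquiv.symm_apply_eq, hcdef]
        rw [h1] at h
        have h2 := congrArg e h
        rw [hKz c] at h2
        simpa using h2
      have hfac : (c - Complex.I) * (c + Complex.I) = 0 := by
        linear_combination hc2 - Complex.I_mul_I
      rcases mul_eq_zero.mp hfac with h | h
      · left
        apply LinearMap.ext; intro q
        apply e.injective
        rw [hJ]
        have hcI : c = Complex.I := by linear_combination h
        calc e (K q) = e (K (e.symm (e q))) := by rw [e.symm_apply_apply]
          _ = c * e q := hKz _
          _ = Complex.I * e q := by rw [hcI]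
      · right
        apply LinearMap.ext; intro q
        apply e.injective
        have hcI : c = -Complex.I := by linear_combination h
        have hne : e ((-J) q) = -Complex.I * e q := by
          simp only [LinearMap.neg_apply, map_neg, hJ]
          ring
        rw [hne]
        calc e (K q) = e (K (e.symm (e q))) := by rw [e.symm_apply_apply]
          _ = c * e q := hKz _
          _ = -Complex.I * e q := by rw [hcI]
    · rintro (rfl | rfl)
      · exact hmain J Complex.I (by simp [Complex.I_mul_I]) hJ
      · refine hmain (-J) (-Complex.I) (by rw [neg_mul_neg, Complex.I_mul_I]) ?_
        intro q
        simp only [LinearMap.neg_apply, map_neg, hJ]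
        ring
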